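/- arXiv:2401.00938 — 4 statements merged into one kernel-verified Lean document; each statement's English description precedes it below -/
import Mathlib

section
/- Let n > 1, a > 0, b > 0, g > 0, m = n, and define U(ξ) = (2ng/((n+1)a))^{1/(n−1)} · cos((n−1)/(2n) · √(a/b) · ξ)^{2/(n−1)} for |ξ| ≤ L where L = (n/(n−1))·√(b/a)·π. Then on the open interval (−L, L), U satisfies the equation −g·U' + a·(U^m)' + b·(U^n)''' = 0. -/
open Set Real

theorem stmt_5 (n m a b g : ℝ) (hn : 1 < n) (ha : 0 < a) (hb : 0 < b) (hg : 0 < g)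
    (hm : m = n)
    (U : ℝ → ℝ)
    (hU : ∀ ξ : ℝ, U ξ = (2 * n * g / ((n + 1) * a)) ^ (1 / (n - 1)) *
        Real.cos ((n - 1) / (2 * n) * Real.sqrt (a / b) * ξ) ^ (2 / (n - 1)))
    (L : ℝ) (hL : L = n / (n - 1) * Real.sqrt (b / a) * π) :
    ∀ ξ ∈ Ioo (-L) L,
      -g * deriv U ξ + a * deriv (fun x => U x ^ m) ξ +
        b * deriv (deriv (deriv (fun x => U x ^ n))) ξ = 0 := by
  simp only [hm]
  clear hm
  set k : ℝ := (n - 1) / (2 * n) * Real.sqrt (a / b) with hk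
  set D : ℝ := 2 * n * g / ((n + 1) * a) with hD
  set p : ℝ := 2 / (n - 1) with hp
  set C : ℝ := D ^ (1 / (n - 1)) with hC
  set E : ℝ := C ^ n with hE0
  set W : ℝ → ℝ := fun x => U x ^ n with hWdef
  have hn0 : (0:ℝ) < n := by linarith
  have hn1 : (0:ℝ) < n - 1 := by linarith
  have hn1' : n - 1 ≠ 0 := ne_of_gt hn1
  have hn0' : n ≠ 0 := ne_of_gt hn0
  have hn2' : n + 1 ≠ 0 := by positivity
  have ha' : a ≠ 0 := ne_of_gt ha
  have hb' : b ≠ 0 := ne_of_gt hb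
  have hD0 : 0 < D := by rw [hD]; positivity
  have hC0 : 0 < C := by rw [hC]; positivity
  have hk0 : 0 < k := by
    rw [hk]
    exact mul_pos (div_pos hn1 (by linarith)) (Real.sqrt_pos.2 (by positivity))
  have hsqrt : Real.sqrt (a / b) * Real.sqrt (b / a) = 1 := by
    rw [← Real.sqrt_mul (by positivity)]
    rw [show a / b * (b / a) = 1 by field_simp]
    exact Real.sqrt_one
  have hkL : k * L = π / 2 := by
    have h1 : k * L = (n - 1) / (2 * n) * (n / (n - 1)) * (Real.sqrt (a / b) * Real.sqrt (b / a)) * π := by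
      rw [hk, hL]; ring
    rw [h1, hsqrt]
    field_simp
  have hcos : ∀ x ∈ Ioo (-L) L, 0 < Real.cos (k * x) := by
    intro x hx
    apply Real.cos_pos_of_mem_Ioo
    constructor
    · have := mul_lt_mul_of_pos_left hx.1 hk0
      rw [mul_neg, hkL] at this
      linarith
    · have := mul_lt_mul_of_pos_left hx.2 hk0
      rw [hkL] at this
      linarith
  have ksq : k ^ 2 = ((n - 1) / (2 * n)) ^ 2 * (a / b) := by
    rw [hk, mul_pow, Real.sq_sqrt (by positivity)]
  have I1 : b * (p + 2) ^ 2 * k ^ 2 = a := by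
    rw [hp, ksq]; field_simp; ring
  have I2 : b * D * (p + 2) * (p + 1) * k ^ 2 = g := by
    rw [hp, hD, ksq]; field_simp; ring
  have hE : E = D * C := by
    rw [hE0, hC, ← Real.rpow_mul hD0.le]
    rw [show D * D ^ (1 / (n - 1)) = D ^ (1:ℝ) * D ^ (1 / (n - 1)) by rw [Real.rpow_one]]
    rw [← Real.rpow_add hD0]
    congr 1
    field_simp
    ring
  -- equality of W with explicit function on the interval
  have hpn : p * n = p + 2 := by rw [hp]; field_simp; ring
  have hWeq : ∀ x ∈ Ioo (-L) L, W x = E * Real.cos (k * x) ^ (p + 2) := by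
    intro x hx
    have hc := (hcos x hx).le
    rw [hWdef]
    simp only [hU x]
    rw [Real.mul_rpow hC0.le (Real.rpow_nonneg hc _), ← Real.rpow_mul hc, hpn, hE0]
  -- derivative helpers
  have hkx : ∀ x : ℝ, HasDerivAt (fun y => k * y) k x := fun x => by
    simpa using (hasDerivAt_id x).const_mul k
  have hck : ∀ x : ℝ, HasDerivAt (fun y => Real.cos (k * y)) (-Real.sin (k * x) * k) x :=
    fun x => (hkx x).cos
  have hsk : ∀ x : ℝ, HasDerivAt (fun y => Real.sin (k * y)) (Real.cos (k * x) * k) x :=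
    fun x => (hkx x).sin
  have hrq : ∀ (q : ℝ), ∀ x ∈ Ioo (-L) L, HasDerivAt (fun y => Real.cos (k * y) ^ q)
      (-Real.sin (k * x) * k * q * Real.cos (k * x) ^ (q - 1)) x := by
    intro q x hx
    exact (hck x).rpow_const (Or.inl (hcos x hx).ne')
  have hmemnhds : ∀ x ∈ Ioo (-L) L, Ioo (-L) L ∈ nhds x :=
    fun x hx => isOpen_Ioo.mem_nhds hx
  -- U derivative
  have hUd : ∀ x ∈ Ioo (-L) L, HasDerivAt U
      (C * p * (-k) * (Real.sin (k * x) * Real.cos (k * x) ^ (p - 1))) x := by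
    intro x hx
    have h := ((hrq p x hx).const_mul C)
    have hUfun : U = fun y => C * Real.cos (k * y) ^ p := funext hU
    rw [hUfun]
    exact h.congr_deriv (by ring)
  -- first derivative of W
  have hW1 : ∀ x ∈ Ioo (-L) L, HasDerivAt W
      (E * (p + 2) * (-k) * (Real.sin (k * x) * Real.cos (k * x) ^ (p + 1))) x := by
    intro x hx
    have h := ((hrq (p + 2) x hx).const_mul E)
    rw [show p + 2 - 1 = p + 1 by ring] at h
    have h2 : HasDerivAt (fun y => E * Real.cos (k * y) ^ (p + 2))
        (E * (p + 2) * (-k) * (Real.sin (k * x) * Real.cos (k * x) ^ (p + 1))) x := by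
      exact h.congr_deriv (by ring)
    exact h2.congr_of_eventuallyEq
      (Filter.eventuallyEq_of_mem (hmemnhds x hx) (fun y hy => hWeq y hy))
  have hd1 : ∀ x ∈ Ioo (-L) L, deriv W x =
      E * (p + 2) * (-k) * (Real.sin (k * x) * Real.cos (k * x) ^ (p + 1)) :=
    fun x hx => (hW1 x hx).deriv
  -- second derivative
  have hW2 : ∀ x ∈ Ioo (-L) L, HasDerivAt (deriv W)
      (E * (p + 2) * (-k ^ 2) * (Real.cos (k * x) * Real.cos (k * x) ^ (p + 1)
        - (p + 1) * (Real.sin (k * x) ^ 2 * Real.cos (k * x) ^ p))) x := by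
    intro x hx
    have h := ((hsk x).mul (hrq (p + 1) x hx)).const_mul (E * (p + 2) * (-k))
    rw [show p + 1 - 1 = p by ring] at h
    have h2 : HasDerivAt (fun y => E * (p + 2) * (-k) *
        (Real.sin (k * y) * Real.cos (k * y) ^ (p + 1)))
        (E * (p + 2) * (-k ^ 2) * (Real.cos (k * x) * Real.cos (k * x) ^ (p + 1)
          - (p + 1) * (Real.sin (k * x) ^ 2 * Real.cos (k * x) ^ p))) x := by
      exact h.congr_deriv (by ring)
    exact h2.congr_of_eventuallyEq
      (Filter.eventuallyEq_of_mem (hmemnhds x hx) (fun y hy => hd1 y hy))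
  have hd2 : ∀ x ∈ Ioo (-L) L, deriv (deriv W) x =
      E * (p + 2) * (-k ^ 2) * (Real.cos (k * x) * Real.cos (k * x) ^ (p + 1)
        - (p + 1) * (Real.sin (k * x) ^ 2 * Real.cos (k * x) ^ p)) :=
    fun x hx => (hW2 x hx).deriv
  -- third derivative
  have hW3 : ∀ x ∈ Ioo (-L) L, HasDerivAt (deriv (deriv W))
      (E * (p + 2) * (-k ^ 3) * (-(Real.sin (k * x) * Real.cos (k * x) ^ (p + 1))
        - 3 * (p + 1) * Real.sin (k * x) * Real.cos (k * x) * Real.cos (k * x) ^ p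
        + p * (p + 1) * Real.sin (k * x) ^ 3 * Real.cos (k * x) ^ (p - 1))) x := by
    intro x hx
    have hinner := ((hck x).mul (hrq (p + 1) x hx)).sub
      ((((hsk x).pow 2).mul (hrq p x hx)).const_mul (p + 1))
    have h := hinner.const_mul (E * (p + 2) * (-k ^ 2))
    rw [show p + 1 - 1 = p by ring] at h
    have h2 : HasDerivAt (fun y => E * (p + 2) * (-k ^ 2) *
        (Real.cos (k * y) * Real.cos (k * y) ^ (p + 1)
          - (p + 1) * (Real.sin (k * y) ^ 2 * Real.cos (k * y) ^ p)))
        (E * (p + 2) * (-k ^ 3) * (-(Real.sin (k * x) * Real.cos (k * x) ^ (p + 1))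
          - 3 * (p + 1) * Real.sin (k * x) * Real.cos (k * x) * Real.cos (k * x) ^ p
          + p * (p + 1) * Real.sin (k * x) ^ 3 * Real.cos (k * x) ^ (p - 1))) x := by
      exact h.congr_deriv (by simp only [Pi.pow_apply]; ring)
    exact h2.congr_of_eventuallyEq
      (Filter.eventuallyEq_of_mem (hmemnhds x hx) (fun y hy => hd2 y hy))
  -- now the main computation
  intro ξ hξ
  have hc := hcos ξ hξ
  rw [(hUd ξ hξ).deriv, hd1 ξ hξ, (hW3 ξ hξ).deriv]
  have hq1 : Real.cos (k * ξ) ^ (p + 1) = Real.cos (k * ξ) ^ (p - 1) * Real.cos (k * ξ) ^ 2 := by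
    rw [show p + 1 = (p - 1) + 2 by ring, Real.rpow_add hc, show (2:ℝ) = ((2:ℕ):ℝ) by norm_num,
      Real.rpow_natCast]
  have hq0 : Real.cos (k * ξ) ^ p = Real.cos (k * ξ) ^ (p - 1) * Real.cos (k * ξ) := by
    nth_rewrite 1 [show p = (p - 1) + 1 by ring]
    rw [Real.rpow_add hc, Real.rpow_one]
  have hs2 : Real.sin (k * ξ) ^ 2 = 1 - Real.cos (k * ξ) ^ 2 := Real.sin_sq _
  rw [hE, hq1, hq0]
  linear_combination (D * C * (p + 2) * k * Real.sin (k * ξ) * Real.cos (k * ξ) ^ (p - 1) * Real.cos (k * ξ) ^ 2) * I1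
    - (C * p * k * Real.sin (k * ξ) * Real.cos (k * ξ) ^ (p - 1)) * I2
    - (b * D * C * (p + 2) * k ^ 3 * p * (p + 1) * Real.sin (k * ξ) * Real.cos (k * ξ) ^ (p - 1)) * hs2
end

section
/- Let 0 < m < 1, a > 0, b < 0, g > 0, n = 1, and define U(ξ) = (2a/(g(m+1)))^{1/(1−m)} · cos(√(−g/(4b))·(1−m)·ξ)^{2/(1−m)} for |ξ| ≤ L = π/((1−m)√(g/|b|)). Then on (−L, L), U satisfies −g·U + a·U^m + b·U'' = C for some constant C, and in fact C = 0. -/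
open Set Real

theorem stmt_6 (m a b g : ℝ) (hm0 : 0 < m) (hm1 : m < 1)
    (ha : 0 < a) (hb : b < 0) (hg : 0 < g)
    (U : ℝ → ℝ)
    (hU : ∀ ξ : ℝ, U ξ = (2 * a / (g * (m + 1))) ^ (1 / (1 - m)) *
        Real.cos (Real.sqrt (-g / (4 * b)) * (1 - m) * ξ) ^ (2 / (1 - m)))
    (L : ℝ) (hL : L = π / ((1 - m) * Real.sqrt (g / |b|))) :
    ∃ C : ℝ, (∀ ξ ∈ Ioo (-L) L,
        -g * U ξ + a * U ξ ^ m + b * deriv (deriv U) ξ = C) ∧ C = 0 := by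
  have hm1' : 0 < 1 - m := by linarith
  have hbneg : 0 < -b := by linarith
  have hKarg : 0 < -g / (4 * b) := by
    rw [show -g / (4*b) = g / (4 * (-b)) by ring]
    positivity
  set K := Real.sqrt (-g / (4 * b)) with hKdef
  have hK : 0 < K := Real.sqrt_pos.mpr hKarg
  have hK2 : K ^ 2 = -g / (4 * b) := Real.sq_sqrt hKarg.le
  set c := K * (1 - m) with hcdef
  have hc : 0 < c := by positivity
  set p := 2 / (1 - m) with hpdef
  have hp2 : (2:ℝ) ≤ p := by rw [hpdef, le_div_iff₀ hm1']; linarith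
  have hp1 : (1:ℝ) ≤ p := by linarith
  have hp1' : (1:ℝ) ≤ p - 1 := by linarith
  set X := 2 * a / (g * (m + 1)) with hXdef
  have hX : 0 < X := by
    rw [hXdef]; exact div_pos (by linarith) (mul_pos hg (by linarith))
  set A := X ^ (1 / (1 - m)) with hAdef
  have hA : 0 < A := Real.rpow_pos_of_pos hX _
  have hUF : U = fun x => A * Real.cos (c * x) ^ p := funext hU
  -- derivative machinery
  have hlin : ∀ x : ℝ, HasDerivAt (fun y : ℝ => c * y) c x := fun x => by
    simpa using (hasDerivAt_id x).const_mul c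
  have hcosd : ∀ x : ℝ, HasDerivAt (fun y => Real.cos (c * y)) (-Real.sin (c*x) * c) x :=
    fun x => (Real.hasDerivAt_cos (c*x)).comp x (hlin x)
  have hsind : ∀ x : ℝ, HasDerivAt (fun y => Real.sin (c * y)) (Real.cos (c*x) * c) x :=
    fun x => (Real.hasDerivAt_sin (c*x)).comp x (hlin x)
  have hU1 : ∀ x : ℝ, HasDerivAt U (A * (-Real.sin (c*x) * c * p * Real.cos (c*x) ^ (p-1))) x := by
    intro x
    rw [hUF]
    exact ((hcosd x).rpow_const (Or.inr hp1)).const_mul A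
  have hdU : deriv U = fun x => A * (-Real.sin (c*x) * c * p * Real.cos (c*x) ^ (p-1)) :=
    funext fun x => (hU1 x).deriv
  -- c * L = π/2
  have h2K : Real.sqrt (g / |b|) = 2 * K := by
    have h : (2*K)^2 = g/|b| := by
      rw [mul_pow, hK2, abs_of_neg hb]; field_simp [hb.ne]; ring
    rw [← h, Real.sqrt_sq (by positivity)]
  have hcL : c * L = π / 2 := by
    rw [hL, h2K, hcdef]; field_simp
  refine ⟨0, fun ξ hξ => ?_, rfl⟩
  -- positivity of cos at ξ
  have h1 : c * ξ < π/2 := by rw [← hcL]; exact (mul_lt_mul_iff_right₀ hc).mpr hξ.2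
  have h2 : -(π/2) < c * ξ := by
    have h := (mul_lt_mul_iff_right₀ hc).mpr hξ.1
    rw [mul_neg, hcL] at h; exact h
  have hyξ : 0 < Real.cos (c * ξ) := Real.cos_pos_of_mem_Ioo ⟨h2, h1⟩
  set y := Real.cos (c * ξ) with hydef
  set s := Real.sin (c * ξ) with hsdef
  -- second derivative at ξ
  have hdd : HasDerivAt (fun x => -(A*c*p) * (Real.sin (c*x) * Real.cos (c*x) ^ (p-1)))
      (-(A*c*p) * (y * c * y^(p-1) + s * (-s * c * (p-1) * y^(p-1-1)))) ξ :=
    ((hsind ξ).mul ((hcosd ξ).rpow_const (Or.inr hp1'))).const_mul _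
  have hE : deriv (deriv U) ξ
      = -(A*c*p) * (y * c * y^(p-1) + s * (-s * c * (p-1) * y^(p-1-1))) := by
    rw [hdU]
    have heq : (fun x => A * (-Real.sin (c*x) * c * p * Real.cos (c*x) ^ (p-1)))
         = fun x => -(A*c*p) * (Real.sin (c*x) * Real.cos (c*x) ^ (p-1)) := by
      funext x; ring
    rw [heq, hdd.deriv]
  -- algebraic facts
  have e1 : y ^ (p-1) = y ^ (p-2) * y := by
    rw [show p - 1 = (p-2) + 1 by ring, Real.rpow_add hyξ, Real.rpow_one]
  have e2 : y ^ (p-1-1) = y ^ (p-2) := by rw [show p-1-1 = p-2 by ring]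
  have eU : U ξ = A * (y ^ (p-2) * y^2) := by
    rw [hU ξ]
    congr 1
    rw [← Real.rpow_natCast y 2, ← Real.rpow_add hyξ]
    norm_num; rfl
  have hUm : U ξ ^ m = A ^ m * y ^ (p-2) := by
    rw [hU ξ, Real.mul_rpow hA.le (Real.rpow_nonneg hyξ.le _),
      ← Real.rpow_mul hyξ.le, show p * m = p - 2 by rw [hpdef]; field_simp; ring]
  have hAm : A ^ m = X ^ (m / (1-m)) := by
    rw [hAdef, ← Real.rpow_mul hX.le]
    congr 1; ring
  have hAX : A = A ^ m * X := by
    rw [hAm, hAdef, ← Real.rpow_add_one (ne_of_gt hX)]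
    congr 1; field_simp; ring
  have hgmX : g * (m+1) / 2 * X = a := by
    rw [hXdef]; field_simp
  have haA : a * A ^ m = g * (m+1) / 2 * A := by
    conv_rhs => rw [hAX]
    linear_combination (-(A ^ m)) * hgmX
  have hbc : b * c ^ 2 = -(g * (1-m)^2) / 4 := by
    rw [hcdef, mul_pow, hK2]; field_simp [hb.ne]
  have hpbc : p * (b * c^2) = -(g * (1-m)) / 2 := by
    rw [hbc, hpdef]; field_simp; ring
  have hppbc : p * (p - 1) * (b * c^2) = -(g * (1+m)) / 2 := by
    rw [hbc, hpdef]; field_simp; ring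
  have hs2 : s^2 = 1 - y^2 := by
    have h := Real.sin_sq_add_cos_sq (c*ξ)
    rw [← hsdef, ← hydef] at h; linarith
  rw [hE, hUm, eU, e1, e2]
  linear_combination (y^(p-2)) * haA + (-(A*y^(p-2)*y^2)) * hpbc
    + (A*y^(p-2)*(1-y^2)) * hppbc + (A*p*(p-1)*(b*c^2)*y^(p-2)) * hs2
end

section
/- Let n > 1 and set m = (n+1)/2. With a, b, g all positive, define α = (g(3n+1)/(2a(n+1)))^{2/(n−1)}, β = a²(n+1)(n−1)²/(2gbn(3n+1)²), and U(ξ) = α(1 − βξ²)^{2/(n−1)} for ξ² ≤ 1/β. Then U satisfies the ODE −gU + aU^m + b(U^n)'' = 0 on the interval (−1/√β, 1/√β). -/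
open Set

set_option maxHeartbeats 1000000 in
theorem stmt_7 (n m a b g : ℝ) (hn : 1 < n) (hm : m = (n + 1) / 2)
    (ha : 0 < a) (hb : 0 < b) (hg : 0 < g)
    (α β : ℝ)
    (hα : α = (g * (3 * n + 1) / (2 * a * (n + 1))) ^ (2 / (n - 1)))
    (hβ : β = a ^ 2 * (n + 1) * (n - 1) ^ 2 / (2 * g * b * n * (3 * n + 1) ^ 2))
    (U : ℝ → ℝ)
    (hU : ∀ ξ : ℝ, U ξ = α * (1 - β * ξ ^ 2) ^ (2 / (n - 1))) :
    ∀ ξ ∈ Ioo (-(1 / Real.sqrt β)) (1 / Real.sqrt β),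
      -g * U ξ + a * U ξ ^ m + b * deriv (deriv (fun x => U x ^ n)) ξ = 0 := by
  intro ξ hξ
  have hn1 : (0:ℝ) < n - 1 := by linarith
  have hn1' : n - 1 ≠ 0 := ne_of_gt hn1
  set p : ℝ := 2 / (n - 1) with hp
  set q : ℝ := 2 * n / (n - 1) with hq
  have hq1 : 1 ≤ q := by rw [hq, le_div_iff₀ hn1]; linarith
  have hq2 : (2:ℝ) ≤ q := by rw [hq, le_div_iff₀ hn1]; linarith
  have hq1' : 1 ≤ q - 1 := by linarith
  have hnp1 : (0:ℝ) < n + 1 := by linarith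
  have h3n1 : (0:ℝ) < 3 * n + 1 := by linarith
  have hβpos : 0 < β := by
    rw [hβ]
    apply div_pos
    · exact mul_pos (mul_pos (pow_pos ha 2) hnp1) (pow_pos hn1 2)
    · exact mul_pos (mul_pos (mul_pos (mul_pos (show (0:ℝ) < 2 by norm_num) hg) hb)
        (show (0:ℝ) < n by linarith)) (pow_pos h3n1 2)
  set K : ℝ := g * (3 * n + 1) / (2 * a * (n + 1)) with hK
  have hKpos : 0 < K := div_pos (mul_pos hg h3n1) (by positivity)
  have hαpos : 0 < α := by rw [hα]; exact Real.rpow_pos_of_pos hKpos _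
  have ht : 0 < 1 - β * ξ ^ 2 := by
    obtain ⟨h1, h2⟩ := hξ
    have hsq : ξ ^ 2 < (1 / Real.sqrt β) ^ 2 := sq_lt_sq' h1 h2
    have he : (1 / Real.sqrt β) ^ 2 = 1 / β := by
      rw [div_pow, one_pow, Real.sq_sqrt hβpos.le]
    rw [he, lt_div_iff₀ hβpos] at hsq
    linarith
  have hfC : ∀ x : ℝ, HasDerivAt (fun y => 1 - β * y ^ 2) (-(2 * β * x)) x := by
    intro x
    have h := ((hasDerivAt_pow 2 x).const_mul β).const_sub 1
    refine h.congr_deriv ?_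
    simp; ring
  set S : Set ℝ := {x : ℝ | 0 < 1 - β * x ^ 2} with hSdef
  have hS : IsOpen S := isOpen_lt continuous_const (continuous_const.sub (continuous_const.mul (continuous_pow 2)))
  have hξS : ξ ∈ S := ht
  -- on S, U^n agrees with α^n * f^q
  have hUn : ∀ x ∈ S, U x ^ n = α ^ n * (1 - β * x ^ 2) ^ q := by
    intro x hx
    have hx' : (0:ℝ) < 1 - β * x ^ 2 := hx
    rw [hU x, Real.mul_rpow hαpos.le (Real.rpow_nonneg hx'.le _),
      ← Real.rpow_mul hx'.le]
    rw [show p * n = q by rw [hp, hq]; ring]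
  -- first derivative of the model function
  have hFd : ∀ x : ℝ, HasDerivAt (fun y => α ^ n * (1 - β * y ^ 2) ^ q)
      (α ^ n * (-(2 * β * x) * q * (1 - β * x ^ 2) ^ (q - 1))) x := by
    intro x
    exact ((hfC x).rpow_const (Or.inr hq1)).const_mul _
  -- first derivative of U^n on S
  have hd1 : ∀ x ∈ S, deriv (fun y => U y ^ n) x
      = α ^ n * (-(2 * β * x) * q * (1 - β * x ^ 2) ^ (q - 1)) := by
    intro x hx
    have heq : (fun y => U y ^ n) =ᶠ[nhds x] (fun y => α ^ n * (1 - β * y ^ 2) ^ q) :=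
      Filter.eventuallyEq_of_mem (hS.mem_nhds hx) (fun y hy => hUn y hy)
    rw [heq.deriv_eq, (hFd x).deriv]
  have hd1' : deriv (fun y => U y ^ n)
      =ᶠ[nhds ξ] (fun x => α ^ n * (-(2 * β * x) * q * (1 - β * x ^ 2) ^ (q - 1))) :=
    Filter.eventuallyEq_of_mem (hS.mem_nhds hξS) (fun x hx => hd1 x hx)
  -- second derivative
  have hlin : HasDerivAt (fun x : ℝ => -(2 * β * x) * q) (-(2 * β) * q) ξ := by
    have h := (((hasDerivAt_id ξ).const_mul (2 * β)).neg).mul_const q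
    refine h.congr_deriv ?_
    ring
  have hin : HasDerivAt (fun x => (1 - β * x ^ 2) ^ (q - 1))
      (-(2 * β * ξ) * (q - 1) * (1 - β * ξ ^ 2) ^ (q - 1 - 1)) ξ :=
    (hfC ξ).rpow_const (Or.inr hq1')
  have hGd : HasDerivAt (fun x => α ^ n * (-(2 * β * x) * q * (1 - β * x ^ 2) ^ (q - 1)))
      (α ^ n * (-(2 * β) * q * (1 - β * ξ ^ 2) ^ (q - 1)
        + -(2 * β * ξ) * q * (-(2 * β * ξ) * (q - 1) * (1 - β * ξ ^ 2) ^ (q - 1 - 1)))) ξ :=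
    (hlin.mul hin).const_mul _
  have hD2 : deriv (deriv (fun x => U x ^ n)) ξ
      = α ^ n * (-(2 * β) * q * (1 - β * ξ ^ 2) ^ (q - 1)
        + -(2 * β * ξ) * q * (-(2 * β * ξ) * (q - 1) * (1 - β * ξ ^ 2) ^ (q - 1 - 1))) := by
    rw [hd1'.deriv_eq, hGd.deriv]
  -- algebraic relations for α
  have hrpow2 : K ^ (2:ℝ) = K ^ 2 := by
    rw [show (2:ℝ) = ((2:ℕ):ℝ) by norm_num, Real.rpow_natCast]
  have hαm : α ^ m = α * K := by
    rw [hα, ← Real.rpow_mul hKpos.le,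
      show p * m = p + 1 by rw [hp, hm]; field_simp; ring,
      Real.rpow_add hKpos, Real.rpow_one]
  have hαn : α ^ n = α * K ^ 2 := by
    rw [hα, ← Real.rpow_mul hKpos.le,
      show p * n = p + 2 by rw [hp]; field_simp; ring,
      Real.rpow_add hKpos, hrpow2]
  -- exponent rewrites at ξ
  have hqm1 : (1 - β * ξ ^ 2) ^ (q - 1) = (1 - β * ξ ^ 2) ^ p * (1 - β * ξ ^ 2) := by
    rw [show q - 1 = p + 1 by rw [hp, hq]; field_simp; ring, Real.rpow_add ht, Real.rpow_one]
  have hqm2 : (1 - β * ξ ^ 2) ^ (q - 1 - 1) = (1 - β * ξ ^ 2) ^ p := by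
    rw [show q - 1 - 1 = p by rw [hp, hq]; field_simp; ring]
  have hUξm : U ξ ^ m = α * K * ((1 - β * ξ ^ 2) ^ p * (1 - β * ξ ^ 2)) := by
    rw [hU ξ, Real.mul_rpow hαpos.le (Real.rpow_nonneg ht.le _), ← Real.rpow_mul ht.le,
      show p * m = q - 1 by rw [hp, hm, hq]; field_simp; ring, hqm1, hαm]
  -- final computation
  rw [hD2, hUξm, hαn, hqm1, hqm2, hU ξ]
  set T : ℝ := (1 - β * ξ ^ 2) ^ p with hT
  rw [hβ, hq, hK]
  field_simp
  ring
end

section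
/- Let 1 < n < 2, m = 2 − n, a > 0, g > 0, b < 0. Define U(ξ) = (a(n+1)/(2g))^{1/(n−1)} · (1 + g²(n−1)²/(abn(n+1)²) · ξ²)^{1/(n−1)}. Then U satisfies −gU + aU^{2−n} + b(U^n)'' = 0 for all ξ with |ξ| < L = (n+1)√(n|ab|)/((n−1)g), and U(±L) = 0. -/
open Set

theorem stmt_8 (n m a b g : ℝ) (hn1 : 1 < n) (hn2 : n < 2) (hm : m = 2 - n)
    (ha : 0 < a) (hg : 0 < g) (hb : b < 0)
    (U : ℝ → ℝ)
    (hU : ∀ ξ : ℝ, U ξ = (a * (n + 1) / (2 * g)) ^ (1 / (n - 1)) *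
        (1 + g ^ 2 * (n - 1) ^ 2 / (a * b * n * (n + 1) ^ 2) * ξ ^ 2) ^ (1 / (n - 1)))
    (L : ℝ) (hL : L = (n + 1) * Real.sqrt (n * |a * b|) / ((n - 1) * g)) :
    (∀ ξ ∈ Ioo (-L) L,
      -g * U ξ + a * U ξ ^ (2 - n) + b * deriv (deriv (fun x => U x ^ n)) ξ = 0) ∧
    U L = 0 ∧ U (-L) = 0 := by
  have hn1' : (0:ℝ) < n - 1 := by linarith
  have hne1 : n - 1 ≠ 0 := ne_of_gt hn1'
  have hn0 : (0:ℝ) < n := by linarith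
  have hn0' : n ≠ 0 := ne_of_gt hn0
  have hnp1 : (0:ℝ) < n + 1 := by linarith
  have hnp1' : n + 1 ≠ 0 := ne_of_gt hnp1
  have ha' : a ≠ 0 := ne_of_gt ha
  have hb' : b ≠ 0 := ne_of_lt hb
  have hg' : g ≠ 0 := ne_of_gt hg
  have hab : a * b < 0 := mul_neg_of_pos_of_neg ha hb
  set p : ℝ := 1 / (n - 1) with hp
  set k : ℝ := g ^ 2 * (n - 1) ^ 2 / (a * b * n * (n + 1) ^ 2) with hk
  set c0 : ℝ := a * (n + 1) / (2 * g) with hc0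
  have hc0pos : 0 < c0 := by rw [hc0]; positivity
  set C : ℝ := c0 ^ p with hC
  have hCpos : 0 < C := Real.rpow_pos_of_pos hc0pos p
  set q : ℝ := n / (n - 1) with hq
  have hpq : p = q - 1 := by rw [hp, hq]; field_simp; ring
  have hpn : p * n = q := by rw [hp, hq]; ring
  have hp2n : p * (2 - n) = q - 2 := by rw [hp, hq]; field_simp; ring
  have hkneg : k < 0 := by
    rw [hk]
    apply div_neg_of_pos_of_neg
    · positivity
    · have h1 : a * b * n * (n + 1) ^ 2 = (a * b) * (n * (n + 1) ^ 2) := by ring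
      rw [h1]
      exact mul_neg_of_neg_of_pos hab (by positivity)
  have habs : |a * b| = -(a * b) := abs_of_neg hab
  have hL2 : L ^ 2 = (n + 1) ^ 2 * (n * (-(a * b))) / ((n - 1) ^ 2 * g ^ 2) := by
    rw [hL, div_pow, mul_pow, mul_pow,
      Real.sq_sqrt (le_of_lt (by rw [habs]; exact mul_pos hn0 (neg_pos.mpr hab)) : (0:ℝ) ≤ n * |a * b|), habs]
  have hkL : k * L ^ 2 = -1 := by
    rw [hL2, hk]
    field_simp
  have hs_pos : ∀ ξ ∈ Ioo (-L) L, 0 < 1 + k * ξ ^ 2 := by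
    intro ξ hξ
    have h2 : ξ ^ 2 < L ^ 2 := by
      have := sq_lt_sq' hξ.1 hξ.2
      simpa [sq] using this
    nlinarith [hkL]
  have hp_pos : 0 < p := by rw [hp]; positivity
  have hendpoint : ∀ ξ : ℝ, ξ ^ 2 = L ^ 2 → U ξ = 0 := by
    intro ξ hξ2
    rw [hU ξ]
    have h0 : 1 + k * ξ ^ 2 = 0 := by rw [hξ2]; linarith [hkL]
    rw [h0, Real.zero_rpow (ne_of_gt hp_pos), mul_zero]
  refine ⟨?_, hendpoint L rfl, hendpoint (-L) (by ring)⟩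
  intro ξ hξ
  set S := Ioo (-L) L with hSdef
  have hSopen : IsOpen S := isOpen_Ioo
  -- derivative of the inner function
  have hinner : ∀ x : ℝ, HasDerivAt (fun y => 1 + k * y ^ 2) (2 * k * x) x := by
    intro x
    have h1 : HasDerivAt (fun y : ℝ => y ^ 2) (2 * x) x := by
      simpa using hasDerivAt_pow 2 x
    have h2 := (h1.const_mul k).const_add 1
    exact h2.congr_deriv (by ring)
  set F1 : ℝ → ℝ := fun x => C ^ n * (1 + k * x ^ 2) ^ q with hF1
  set F2 : ℝ → ℝ := fun x => (C ^ n * (2 * k * q)) * (x * (1 + k * x ^ 2) ^ (q - 1)) with hF2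
  have hUn : ∀ x ∈ S, U x ^ n = F1 x := by
    intro x hx
    have hux : 0 < 1 + k * x ^ 2 := hs_pos x hx
    rw [hU x, Real.mul_rpow hCpos.le (Real.rpow_nonneg hux.le p),
      ← Real.rpow_mul hux.le, hpn]
  have hF1deriv : ∀ x ∈ S, HasDerivAt F1 (F2 x) x := by
    intro x hx
    have hux : 0 < 1 + k * x ^ 2 := hs_pos x hx
    have houter : HasDerivAt (fun y : ℝ => y ^ q)
        (q * (1 + k * x ^ 2) ^ (q - 1)) (1 + k * x ^ 2) :=
      Real.hasDerivAt_rpow_const (Or.inl (ne_of_gt hux))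
    have hcomp := (houter.comp x (hinner x)).const_mul (C ^ n)
    exact hcomp.congr_deriv (by simp only [hF2]; ring)
  have hd1 : ∀ x ∈ S, deriv (fun y => U y ^ n) x = F2 x := by
    intro x hx
    have hev : (fun y => U y ^ n) =ᶠ[nhds x] F1 := by
      filter_upwards [hSopen.mem_nhds hx] with y hy using hUn y hy
    rw [hev.deriv_eq, (hF1deriv x hx).deriv]
  have hev2 : deriv (fun y => U y ^ n) =ᶠ[nhds ξ] F2 := by
    filter_upwards [hSopen.mem_nhds hξ] with y hy using hd1 y hy
  -- second derivative
  have huξ : 0 < 1 + k * ξ ^ 2 := hs_pos ξ hξ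
  set t : ℝ := 1 + k * ξ ^ 2 with ht
  have houter2 : HasDerivAt (fun y : ℝ => y ^ (q - 1)) ((q - 1) * t ^ (q - 1 - 1)) t :=
    Real.hasDerivAt_rpow_const (Or.inl (ne_of_gt huξ))
  have hcomp2 : HasDerivAt (fun x => (1 + k * x ^ 2) ^ (q - 1))
      ((q - 1) * t ^ (q - 2) * (2 * k * ξ)) ξ := by
    have := houter2.comp ξ (hinner ξ)
    exact this.congr_deriv (by rw [show q - 1 - 1 = q - 2 by ring])
  have hprod : HasDerivAt (fun x => x * (1 + k * x ^ 2) ^ (q - 1))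
      (1 * t ^ (q - 1) + ξ * ((q - 1) * t ^ (q - 2) * (2 * k * ξ))) ξ :=
    (hasDerivAt_id ξ).mul hcomp2
  have hF2deriv : HasDerivAt F2
      ((C ^ n * (2 * k * q)) *
        (1 * t ^ (q - 1) + ξ * ((q - 1) * t ^ (q - 2) * (2 * k * ξ)))) ξ :=
    hprod.const_mul _
  have hDD : deriv (deriv (fun y => U y ^ n)) ξ =
      (C ^ n * (2 * k * q)) *
        (1 * t ^ (q - 1) + ξ * ((q - 1) * t ^ (q - 2) * (2 * k * ξ))) := by
    rw [hev2.deriv_eq, hF2deriv.deriv]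
  -- algebraic identities between rpow values
  set B : ℝ := c0 ^ (q - 2) with hB
  set T : ℝ := t ^ (q - 2) with hT
  have hCB : C = B * c0 := by
    rw [hC, hB, hpq, show q - 1 = (q - 2) + 1 by ring, Real.rpow_add hc0pos,
      Real.rpow_one]
  have hC2n : C ^ (2 - n) = B := by
    rw [hC, hB, ← Real.rpow_mul hc0pos.le, hp2n]
  have hCn : C ^ n = B * (c0 * c0) := by
    rw [hC, hB, ← Real.rpow_mul hc0pos.le, hpn,
      show q = (q - 2) + 1 + 1 by ring, Real.rpow_add hc0pos, Real.rpow_add hc0pos,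
      Real.rpow_one]
    ring
  have htq1 : t ^ (q - 1) = T * t := by
    rw [hT, show q - 1 = (q - 2) + 1 by ring, Real.rpow_add huξ, Real.rpow_one]
  have htp : t ^ p = T * t := by rw [hpq, htq1]
  have hU2n : U ξ ^ (2 - n) = B * T := by
    rw [hU ξ, ← ht, Real.mul_rpow hCpos.le (Real.rpow_nonneg huξ.le p),
      ← Real.rpow_mul huξ.le, hp2n, hC2n, hT]
  have hUξ : U ξ = B * c0 * (T * t) := by
    rw [hU ξ, ← ht, htp, hCB]
  rw [hDD, hU2n, hUξ, hCn, htq1]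
  have hkxi : k * ξ ^ 2 = t - 1 := by rw [ht]; ring
  have hcoef1 : -(g * c0) + b * (c0 * c0) * (2 * k * q) * (2 * q - 1) = 0 := by
    rw [hq, hk, hc0]; field_simp; ring
  have hcoef2 : a - b * (c0 * c0) * (4 * k * q * (q - 1)) = 0 := by
    rw [hq, hk, hc0]; field_simp; ring
  linear_combination (B * T * t) * hcoef1 + (B * T) * hcoef2 +
    (4 * b * (c0 * c0) * k * q * (q - 1) * B * T) * hkxi
end
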